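/- Let A be a symmetric d×d integer matrix and F(b) = bᵀAb. Let λ ∈ ℤ^d, k ∈ ℤ, m, q positive integers, a, l ∈ ℤ, and c ∈ ℤ^d. Define S_{mq}(a,l;c) := Σ_{b ∈ (ℤ/mqℤ)^d} e( ((lq+a)(2λᵀAb − k) + a·m·F(b) + ⟨c,b⟩) / (mq) ). If S_{mq}(a,l;c) ≠ 0, then c ≡ −2(lq+a)·Aλ (mod m). Consequently, setting S_{mq}(c) := Σ_{l mod m} Σ_{a ∈ (ℤ/qℤ)^×} S_{mq}(a,l;c), one has S_{mq}(c) = 0 unless c ≡ α·Aλ (mod m) for some integer α. -/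

import Mathlib

open Matrix

/-- `e(t) = e^{2πit}`. -/
noncomputable def eC (t : ℝ) : ℂ := Complex.exp (2 * Real.pi * Complex.I * t)

/-- The quadratic exponential sum
`S_{mq}(a,l;c) = Σ_{b ∈ (ℤ/mqℤ)^d} e(((lq+a)(2λᵀAb − k) + a·m·F(b) + ⟨c,b⟩)/(mq))`,
summed over the complete set of representatives `0, 1, …, mq − 1` in each coordinate. -/
noncomputable def Smq (d m q : ℕ) (A : Matrix (Fin d) (Fin d) ℤ)
    (lam : Fin d → ℤ) (k a l : ℤ) (c : Fin d → ℤ) : ℂ :=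
  ∑ b : Fin d → Fin (m * q),
    eC ((((l * (q : ℤ) + a) * (2 * (lam ⬝ᵥ A.mulVec fun i => ((b i : ℕ) : ℤ)) - k)
        + a * (m : ℤ) * ((fun i => ((b i : ℕ) : ℤ)) ⬝ᵥ A.mulVec fun i => ((b i : ℕ) : ℤ))
        + c ⬝ᵥ (fun i => ((b i : ℕ) : ℤ)) : ℤ) : ℝ) / ((m * q : ℕ) : ℝ))

/-- `S_{mq}(c) = Σ_{l mod m} Σ_{a ∈ (ℤ/qℤ)^×} S_{mq}(a,l;c)`. -/
noncomputable def SmqTotal (d m q : ℕ) (A : Matrix (Fin d) (Fin d) ℤ)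
    (lam : Fin d → ℤ) (k : ℤ) (c : Fin d → ℤ) : ℂ :=
  ∑ l ∈ Finset.range m, ∑ a ∈ (Finset.range q).filter (fun a => Nat.Coprime a q),
    Smq d m q A lam k (a : ℤ) (l : ℤ) c

lemma eC_add (s t : ℝ) : eC (s + t) = eC s * eC t := by
  simp [eC, Complex.ofReal_add, mul_add, Complex.exp_add]

lemma eC_int (n : ℤ) : eC (n : ℝ) = 1 := by
  rw [eC]
  push_cast
  rw [show 2 * (Real.pi : ℂ) * Complex.I * n = n * (2 * Real.pi * Complex.I) by ring]
  exact Complex.exp_int_mul_two_pi_mul_I n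

lemma eC_div_eq_one_iff {N : ℕ} (hN : 0 < N) (x : ℤ) :
    eC ((x : ℝ) / N) = 1 ↔ (N : ℤ) ∣ x := by
  have hN0 : (N : ℝ) ≠ 0 := Nat.cast_ne_zero.mpr hN.ne'
  constructor
  · intro h
    rw [eC, Complex.exp_eq_one_iff] at h
    obtain ⟨n, hn⟩ := h
    have h2 : (2 * (Real.pi : ℂ) * Complex.I) ≠ 0 := by
      simp [Real.pi_ne_zero, Complex.I_ne_zero]
    have hz : (((x : ℝ) / N : ℝ) : ℂ) = (n : ℂ) :=
      mul_left_cancel₀ h2 (hn.trans (by ring))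
    have hr : (x : ℝ) / N = (n : ℝ) := by exact_mod_cast hz
    have hx : (x : ℝ) = (n : ℝ) * N := by field_simp at hr; linarith
    have : x = n * N := by exact_mod_cast hx
    exact ⟨n, by linarith⟩
  · rintro ⟨t, rfl⟩
    have : ((N * t : ℤ) : ℝ) / N = (t : ℝ) := by push_cast; field_simp
    rw [this]
    exact_mod_cast eC_int t

lemma eC_div_congr {N : ℕ} (hN : 0 < N) {x y : ℤ} (h : (N : ℤ) ∣ x - y) :
    eC ((x : ℝ) / N) = eC ((y : ℝ) / N) := by
  have hN0 : (N : ℝ) ≠ 0 := Nat.cast_ne_zero.mpr hN.ne'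
  obtain ⟨t, ht⟩ := h
  have hx : x = y + N * t := by omega
  subst hx
  have : ((y + N * t : ℤ) : ℝ) / N = (y : ℝ) / N + (t : ℝ) := by push_cast; field_simp
  rw [this, eC_add]
  rw [show ((t : ℝ)) = ((t : ℤ) : ℝ) by norm_cast, eC_int]
  ring

lemma dvd_dot_right {d : ℕ} (N : ℤ) (u v w : Fin d → ℤ)
    (h : ∀ j, N ∣ v j - w j) : N ∣ u ⬝ᵥ v - u ⬝ᵥ w := by
  rw [dotProduct, dotProduct, ← Finset.sum_sub_distrib]
  refine Finset.dvd_sum fun j _ => ?_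
  rw [← mul_sub]
  exact (h j).mul_left _

lemma dvd_dot_left {d : ℕ} (N : ℤ) (u v w : Fin d → ℤ)
    (h : ∀ j, N ∣ v j - w j) : N ∣ v ⬝ᵥ u - w ⬝ᵥ u := by
  rw [dotProduct, dotProduct, ← Finset.sum_sub_distrib]
  refine Finset.dvd_sum fun j _ => ?_
  rw [← sub_mul]
  exact (h j).mul_right _

lemma dvd_mulVec {d : ℕ} (N : ℤ) (A : Matrix (Fin d) (Fin d) ℤ) (v w : Fin d → ℤ)
    (h : ∀ j, N ∣ v j - w j) : ∀ j, N ∣ A.mulVec v j - A.mulVec w j := by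
  intro j
  exact dvd_dot_right N (A j) v w h

/-- The integer quadratic form occurring in `Smq`. -/
def fQ {d : ℕ} (A : Matrix (Fin d) (Fin d) ℤ) (lam c : Fin d → ℤ) (k LQ aM : ℤ)
    (v : Fin d → ℤ) : ℤ :=
  LQ * (2 * (lam ⬝ᵥ A.mulVec v) - k) + aM * (v ⬝ᵥ A.mulVec v) + c ⬝ᵥ v

lemma fQ_cong {d : ℕ} (N : ℤ) (A : Matrix (Fin d) (Fin d) ℤ)
    (lam c : Fin d → ℤ) (k LQ aM : ℤ) (v w : Fin d → ℤ)
    (h : ∀ j, N ∣ v j - w j) :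
    N ∣ fQ A lam c k LQ aM v - fQ A lam c k LQ aM w := by
  have hAvw := dvd_mulVec N A v w h
  have h1 : N ∣ lam ⬝ᵥ A.mulVec v - lam ⬝ᵥ A.mulVec w := dvd_dot_right N lam _ _ hAvw
  have h2 : N ∣ v ⬝ᵥ A.mulVec v - w ⬝ᵥ A.mulVec w := by
    have hx : N ∣ v ⬝ᵥ A.mulVec v - v ⬝ᵥ A.mulVec w := dvd_dot_right N v _ _ hAvw
    have hy : N ∣ v ⬝ᵥ A.mulVec w - w ⬝ᵥ A.mulVec w := dvd_dot_left N (A.mulVec w) v w h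
    have := dvd_add hx hy
    convert this using 1; rfl; ring
  have h3 : N ∣ c ⬝ᵥ v - c ⬝ᵥ w := dvd_dot_right N c _ _ h
  have key := dvd_add (dvd_add (h1.mul_left (LQ * 2)) (h2.mul_left aM)) h3
  convert key using 1
  rfl
  simp only [fQ]; ring

lemma fQ_shift {d : ℕ} (q : ℤ) (A : Matrix (Fin d) (Fin d) ℤ) (hA : A.IsSymm)
    (lam c : Fin d → ℤ) (k LQ a M : ℤ) (v : Fin d → ℤ) (i : Fin d) :
    fQ A lam c k LQ (a * M) (v + Pi.single i q)
    = fQ A lam c k LQ (a * M) v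
      + q * (2 * LQ * (A.mulVec lam i) + c i)
      + (M * q) * (2 * a * (A.mulVec v i) + a * q * (A i i)) := by
  have hsym : ∀ u : Fin d → ℤ, u ⬝ᵥ A.mulVec (Pi.single i q) = q * A.mulVec u i := by
    intro u
    rw [show A.mulVec (Pi.single i q) = fun j => A j i * q from funext fun _ => dotProduct_single _ _ _]
    simp only [dotProduct, Matrix.mulVec, Finset.mul_sum]
    refine Finset.sum_congr rfl fun j _ => ?_
    rw [hA.apply i j]
    ring
  have hs1 : Pi.single i q ⬝ᵥ A.mulVec v = q * A.mulVec v i :=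
    single_dotProduct _ _ _
  have hs2 : Pi.single i q ⬝ᵥ A.mulVec (Pi.single i q) = q * (A i i * q) := by
    rw [single_dotProduct, show A.mulVec (Pi.single i q) = fun j => A j i * q from funext fun _ => dotProduct_single _ _ _]
  have hc : c ⬝ᵥ Pi.single i q = c i * q := dotProduct_single _ _ _
  simp only [fQ]
  rw [Matrix.mulVec_add, dotProduct_add, add_dotProduct,
    dotProduct_add, dotProduct_add, dotProduct_add,
    hsym lam, hsym v, hs1, hs2, hc]
  ring

/-- If `S_{mq}(a,l;c) ≠ 0` then `c ≡ −2(lq+a)·Aλ (mod m)`; consequently `S_{mq}(c) = 0` unless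
`c ≡ α·Aλ (mod m)` for some integer `α`. -/
theorem stmt_10 (d m q : ℕ) (hm : 0 < m) (hq : 0 < q)
    (A : Matrix (Fin d) (Fin d) ℤ) (hA : A.IsSymm)
    (lam : Fin d → ℤ) (k : ℤ) (c : Fin d → ℤ) :
    (∀ a l : ℤ, Smq d m q A lam k a l c ≠ 0 →
      ∀ i, (m : ℤ) ∣ c i - (-(2 * (l * (q : ℤ) + a)) * A.mulVec lam i)) ∧
    (SmqTotal d m q A lam k c ≠ 0 →
      ∃ α : ℤ, ∀ i, (m : ℤ) ∣ c i - α * A.mulVec lam i) := by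
  have hN : 0 < m * q := Nat.mul_pos hm hq
  haveI : NeZero (m * q) := ⟨hN.ne'⟩
  have main : ∀ a l : ℤ, Smq d m q A lam k a l c ≠ 0 →
      ∀ i, (m : ℤ) ∣ c i - (-(2 * (l * (q : ℤ) + a)) * A.mulVec lam i) := by
    intro a l hS i
    have hval : ∀ x : Fin (m * q), (((x : ℕ) : ZMod (m * q))).val = (x : ℕ) :=
      fun x => ZMod.val_natCast_of_lt x.isLt
    have hinj : Function.Injective (fun x : Fin (m * q) => ((x : ℕ) : ZMod (m * q))) := by
      intro x y hxy
      have := congrArg ZMod.val hxy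
      simp only [hval] at this
      exact Fin.ext this
    have hbij : Function.Bijective (fun x : Fin (m * q) => ((x : ℕ) : ZMod (m * q))) :=
      (Fintype.bijective_iff_injective_and_card _).mpr ⟨hinj, by simp [ZMod.card]⟩
    set e0 : Fin (m * q) ≃ ZMod (m * q) := Equiv.ofBijective _ hbij with he0
    set e : (Fin d → Fin (m * q)) ≃ (Fin d → ZMod (m * q)) :=
      Equiv.piCongrRight (fun _ => e0) with he
    set G : (Fin d → ZMod (m * q)) → ℂ := fun b =>
      eC (((fQ A lam c k (l * (q : ℤ) + a) (a * (m : ℤ)) fun j => ((b j).val : ℤ)) : ℝ)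
        / ((m * q : ℕ) : ℝ)) with hG
    have hSG : Smq d m q A lam k a l c = ∑ b : Fin d → ZMod (m * q), G b := by
      rw [Smq]
      refine Fintype.sum_equiv e _ _ fun b => ?_
      simp only [hG, he, he0, Equiv.piCongrRight_apply, Pi.map_apply,
        Equiv.ofBijective_apply, hval]
      rfl
    rw [hSG] at hS
    set T : ℤ := (q : ℤ) * (2 * (l * (q : ℤ) + a) * (A.mulVec lam i) + c i) with hT
    set u : Fin d → ZMod (m * q) := Pi.single i ((q : ℤ) : ZMod (m * q)) with hu
    have hGshift : ∀ b : Fin d → ZMod (m * q),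
        G (b + u) = eC ((T : ℝ) / ((m * q : ℕ) : ℝ)) * G b := by
      intro b
      set v : Fin d → ℤ := fun j => ((b j).val : ℤ) with hv
      have hc1 : ∀ j, ((m * q : ℕ) : ℤ) ∣
          (((b + u) j).val : ℤ) - ((v + Pi.single i (q : ℤ) : Fin d → ℤ) j) := by
        intro j
        rw [← ZMod.intCast_zmod_eq_zero_iff_dvd]
        push_cast
        simp only [Pi.add_apply, ZMod.natCast_val, ZMod.cast_id, hv, hu]
        rw [sub_eq_zero]
        by_cases hj : j = i
        · subst hj
          simp [Pi.single_eq_same]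
        · simp [Pi.single_eq_of_ne hj]
      have step1 : G (b + u) =
          eC (((fQ A lam c k (l * (q : ℤ) + a) (a * (m : ℤ))
              (v + Pi.single i (q : ℤ))) : ℝ) / ((m * q : ℕ) : ℝ)) := by
        simp only [hG]
        exact eC_div_congr hN (fQ_cong _ A lam c k _ _ _ _ hc1)
      rw [step1, fQ_shift (q : ℤ) A hA lam c k _ a (m : ℤ) v i]
      rw [← hT]
      set E : ℤ := 2 * a * (A.mulVec v i) + a * (q : ℤ) * (A i i) with hE
      have harith :
          ((fQ A lam c k (l * (q : ℤ) + a) (a * (m : ℤ)) v + T + ((m : ℤ) * (q : ℤ)) * E : ℤ) : ℝ)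
            / ((m * q : ℕ) : ℝ)
          = (T : ℝ) / ((m * q : ℕ) : ℝ)
            + (((fQ A lam c k (l * (q : ℤ) + a) (a * (m : ℤ)) v : ℤ) : ℝ) / ((m * q : ℕ) : ℝ)
              + ((E : ℤ) : ℝ)) := by
        have hNR : ((m : ℝ)) * q ≠ 0 := by positivity
        push_cast
        field_simp
        ring
      rw [harith, eC_add, eC_add, eC_int]
      simp only [hG, hv]
      ring
    have hsum : (∑ b : Fin d → ZMod (m * q), G b)
        = eC ((T : ℝ) / ((m * q : ℕ) : ℝ)) * ∑ b : Fin d → ZMod (m * q), G b := by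
      conv_lhs => rw [← Equiv.sum_comp (Equiv.addRight u) G]
      rw [Finset.mul_sum]
      exact Finset.sum_congr rfl fun b _ => hGshift b
    have hone : eC ((T : ℝ) / ((m * q : ℕ) : ℝ)) = 1 :=
      (mul_right_cancel₀ hS ((one_mul _).trans hsum)).symm
    have hdvd : ((m * q : ℕ) : ℤ) ∣ T := (eC_div_eq_one_iff hN T).mp hone
    obtain ⟨t, ht⟩ := hdvd
    have hq0 : (q : ℤ) ≠ 0 := Int.natCast_ne_zero.mpr hq.ne'
    have ht2 : (q : ℤ) * (2 * (l * (q : ℤ) + a) * (A.mulVec lam i) + c i)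
        = (q : ℤ) * ((m : ℤ) * t) := by
      rw [← hT, ht]; push_cast; ring
    have hX := mul_left_cancel₀ hq0 ht2
    have hgoal : c i - (-(2 * (l * (q : ℤ) + a)) * A.mulVec lam i)
        = 2 * (l * (q : ℤ) + a) * (A.mulVec lam i) + c i := by ring
    rw [hgoal, hX]
    exact ⟨t, rfl⟩
  refine ⟨main, ?_⟩
  intro hT
  rw [SmqTotal] at hT
  obtain ⟨l, -, hl⟩ := Finset.exists_ne_zero_of_sum_ne_zero hT
  obtain ⟨a, -, ha⟩ := Finset.exists_ne_zero_of_sum_ne_zero hl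
  exact ⟨-(2 * ((l : ℤ) * q + a)), main a l ha⟩
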